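/- Let g ∈ F_2[X] be monic of degree r and let f ∈ F_2[X] with deg f < r. Define a_k to be the coefficient of X^{r-1} in X^k f mod g. Then for every k ≥ 0, deg(X^k f mod g) = r - 1 - max{ j : a_k = a_{k+1} = ... = a_{k+j-1} = 0 }, where the maximum is taken to be 0 if a_k = 1 (and with the convention that this holds whenever the run of zeros starting at position k is finite). -/

import Mathlib

open Polynomial

/-- For a Galois-mode LFSR with monic connection polynomial `g` of degree `r`
and initial state `f` (with `deg f < r`), the degree of the `k`-th state
`X^k f mod g` equals `r - 1 - J`, where `J` is the length of the run of zeros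
of the output sequence starting at position `k` (assumed finite). -/
theorem stmt7 (r : ℕ) (g f : Polynomial (ZMod 2))
    (hg : g.Monic) (hr : g.natDegree = r) (hf : f.degree < r)
    (a : ℕ → ZMod 2)
    (ha : ∀ k : ℕ, a k = ((X ^ k * f) % g).coeff (r - 1)) :
    ∀ k : ℕ, (h : ∃ j : ℕ, a (k + j) ≠ 0) →
      ((X ^ k * f) % g).natDegree = r - 1 - Nat.find h := by
  have hg0 : g ≠ 0 := hg.ne_zero
  have hdg : g.degree = (r : WithBot ℕ) := by rw [degree_eq_natDegree hg0, hr]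
  have hmod : ∀ p : Polynomial (ZMod 2), p % g = p %ₘ g := fun p =>
    (modByMonic_eq_mod p hg).symm
  -- key shift lemma
  have key : ∀ k j : ℕ, (X ^ (k + j) * f) %ₘ g = (X ^ j * ((X ^ k * f) %ₘ g)) %ₘ g := by
    intro k j
    apply modByMonic_eq_of_dvd_sub hg
    have : X ^ (k + j) * f - X ^ j * ((X ^ k * f) %ₘ g)
        = X ^ j * (X ^ k * f - (X ^ k * f) %ₘ g) := by ring
    rw [this]
    exact Dvd.dvd.mul_left ⟨(X ^ k * f) /ₘ g,
      (sub_eq_of_eq_add' (modByMonic_add_div (X ^ k * f) g).symm)⟩ _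
  intro k h
  set s := (X ^ k * f) %ₘ g with hs
  rw [hmod]
  by_cases hsz : s = 0
  · exfalso
    obtain ⟨j, hj⟩ := h
    apply hj
    rw [ha, hmod, key, ← hs, hsz, mul_zero, zero_modByMonic, coeff_zero]
  · have hds : s.degree < (r : WithBot ℕ) := hdg ▸ degree_modByMonic_lt _ hg
    set d := s.natDegree with hd
    have hdr : d < r := by
      rwa [← natDegree_lt_iff_degree_lt hsz] at hds
    -- for j ≤ r - 1 - d, state is X^j * s
    have hst : ∀ j : ℕ, j ≤ r - 1 - d → (X ^ (k + j) * f) %ₘ g = X ^ j * s := by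
      intro j hj
      rw [key, ← hs]
      apply (modByMonic_eq_self_iff hg).2
      rw [hdg, ← natDegree_lt_iff_degree_lt (mul_ne_zero (pow_ne_zero _ X_ne_zero) hsz), natDegree_mul (pow_ne_zero _ X_ne_zero) hsz,
        natDegree_X_pow]
      omega
    have hcoeff : ∀ j : ℕ, j ≤ r - 1 - d → a (k + j) = s.coeff (r - 1 - j) := by
      intro j hj
      rw [ha, hmod, hst j hj]
      have : r - 1 = (r - 1 - j) + j := by omega
      rw [this, coeff_X_pow_mul]
      congr 1
      omega
    have hfind : Nat.find h = r - 1 - d := by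
      rw [Nat.find_eq_iff]
      constructor
      · rw [hcoeff _ le_rfl]
        have : r - 1 - (r - 1 - d) = d := by omega
        rw [this]
        simpa [hd] using mt leadingCoeff_eq_zero.1 hsz
      · intro j hj hne
        apply hne
        rw [hcoeff j (le_of_lt hj)]
        apply coeff_eq_zero_of_natDegree_lt
        omega
    rw [hfind]
    omega
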